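/- Let $T$ be a Schur-concave t-norm with additive generator $g$, let $0 < \hat{t} \in [T(t, c), \hat{t}_{max}]$, and let $K \in \{0,\ldots,n-1\}$. Define $\lambda_K = g^{-1}\left(\frac{1}{n-K}\left(g(\hat{t}) - \sum_{i=1}^K g(t^\downarrow_i) - \sum_{i=1}^m g(c_i)\right)\right)$ where $t^\downarrow$ is $t$ sorted descending. If the vector $\hat{w}$ defined by $\hat{w}_i = \lambda_K$ when $t_i < \lambda_K$ and $\hat{w}_i = t_i$ otherwise lies in $[0,1]^n$ with exactly $K$ entries unchanged above $\lambda_K$, then $T(\hat{w}, c) = \hat{t}$. -/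

import Mathlib

open Set Finset
open scoped ENNReal

/-- `t` majorizes `t'`. -/
def Majorizes {n : ℕ} (t t' : Fin n → ℝ) : Prop :=
  (∑ i, t i = ∑ i, t' i) ∧
  ∀ s' : Finset (Fin n), ∃ s : Finset (Fin n), s.card = s'.card ∧
    ∑ i ∈ s', t' i ≤ ∑ i ∈ s, t i

/-- The (extended) t-norm generated by the additive generator `g` with pseudo-inverse
`ginv`: `T x = g⁻¹ (min (g 0⁺) (∑ g xᵢ))`. -/
noncomputable def Tgen (g : ℝ → ℝ≥0∞) (ginv : ℝ≥0∞ → ℝ) {k : ℕ} (x : Fin k → ℝ) : ℝ :=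
  ginv (min (g 0) (∑ i, g (x i)))

/-- Closed form for the minimal refined vector of a Schur-concave t-norm with additive
generator `g`:  with `λ_K = g⁻¹((g t̂ - ∑_{i∈s} g tᵢ - ∑ⱼ g cⱼ)/(n-K))`, where `s` is a set
of the `K` largest entries of `t` (exactly the entries with `t i ≥ λ_K`), the vector `ŵ`
with `ŵᵢ = λ_K` when `tᵢ < λ_K` and `ŵᵢ = tᵢ` otherwise satisfies `T(ŵ, c) = t̂`,
provided `ŵ ∈ [0,1]ⁿ`. -/
theorem additive_generator_refined_value (n m : ℕ)
    (g : ℝ → ℝ≥0∞) (ginv : ℝ≥0∞ → ℝ)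
    (hganti : StrictAntiOn g (Icc (0 : ℝ) 1)) (hg1 : g 1 = 0)
    (hginv_g : ∀ x ∈ Icc (0 : ℝ) 1, ginv (g x) = x)
    (hg_ginv : ∀ y : ℝ≥0∞, y ≤ g 0 → g (ginv y) = y ∧ ginv y ∈ Icc (0 : ℝ) 1)
    (hschur : ∀ (k : ℕ) (x y : Fin k → ℝ), x ∈ Icc (0 : Fin k → ℝ) 1 →
      y ∈ Icc (0 : Fin k → ℝ) 1 → Majorizes x y → Tgen g ginv x ≤ Tgen g ginv y)
    (t : Fin n → ℝ) (c : Fin m → ℝ)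
    (ht : ∀ i, t i ∈ Icc (0 : ℝ) 1) (hc : ∀ j, c j ∈ Icc (0 : ℝ) 1)
    (that : ℝ) (hpos : 0 < that)
    (hlow : Tgen g ginv (Fin.append t c) ≤ that)
    (hhigh : that ≤ Tgen g ginv c)
    (K : ℕ) (hK : K < n)
    (s : Finset (Fin n)) (hcard : s.card = K)
    (lamK : ℝ)
    (hlam : lamK =
      ginv ((g that - ∑ i ∈ s, g (t i) - ∑ j, g (c j)) / ((n - K : ℕ) : ℝ≥0∞)))
    (hkeep : ∀ i ∈ s, lamK ≤ t i) (hdrop : ∀ i ∉ s, t i < lamK)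
    (hlam01 : lamK ∈ Icc (0 : ℝ) 1) :
    Tgen g ginv (Fin.append (fun i => if t i < lamK then lamK else t i) c) = that := by
  classical
  set S := ∑ i ∈ s, g (t i) with hS
  set C := ∑ j, g (c j) with hC
  set D := (g that - S - C) / ((n - K : ℕ) : ℝ≥0∞) with hD
  have hTc : Tgen g ginv c ∈ Icc (0:ℝ) 1 := by
    have := (hg_ginv (min (g 0) C) (min_le_left _ _)).2
    simpa [Tgen] using this
  have hthat01 : that ∈ Icc (0:ℝ) 1 := ⟨hpos.le, le_trans hhigh hTc.2⟩
  have h01 : (0:ℝ) ∈ Icc (0:ℝ) 1 := ⟨le_refl _, zero_le_one⟩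
  have h11 : (1:ℝ) ∈ Icc (0:ℝ) 1 := ⟨zero_le_one, le_refl _⟩
  have hgthat0 : g that ≤ g 0 := hganti.antitoneOn h01 hthat01 hthat01.1
  have hnK : ((n - K : ℕ) : ℝ≥0∞) ≠ 0 := by
    exact_mod_cast Nat.sub_ne_zero_of_lt hK
  have hnKtop : ((n - K : ℕ) : ℝ≥0∞) ≠ ⊤ := ENNReal.natCast_ne_top _
  have hmul : ((n - K : ℕ) : ℝ≥0∞) * D = g that - S - C :=
    ENNReal.mul_div_cancel hnK hnKtop
  have hone : (1 : ℝ≥0∞) ≤ ((n - K : ℕ) : ℝ≥0∞) := by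
    exact_mod_cast Nat.one_le_iff_ne_zero.2 (Nat.sub_ne_zero_of_lt hK)
  have hDle : D ≤ g 0 := by
    have h1 : D ≤ ((n - K : ℕ) : ℝ≥0∞) * D := le_mul_of_one_le_left (zero_le) hone
    have h2 : g that - S - C ≤ g that := le_trans (tsub_le_self) (tsub_le_self)
    exact h1.trans (hmul ▸ (h2.trans hgthat0))
  have hglam : g lamK = D := by rw [hlam]; exact (hg_ginv D hDle).1
  -- the refined vector
  set w : Fin n → ℝ := fun i => if t i < lamK then lamK else t i with hw
  have hws : ∀ i ∈ s, g (w i) = g (t i) := by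
    intro i hi
    simp [hw, not_lt.2 (hkeep i hi)]
  have hwsc : ∀ i ∈ sᶜ, g (w i) = D := by
    intro i hi
    rw [Finset.mem_compl] at hi
    simp [hw, hdrop i hi, hglam]
  have hsumw : ∑ i, g (w i) = S + ((n - K : ℕ) : ℝ≥0∞) * D := by
    rw [← Finset.sum_add_sum_compl s]
    rw [Finset.sum_congr rfl hws, Finset.sum_congr rfl hwsc, Finset.sum_const,
      Finset.card_compl, Fintype.card_fin, hcard, nsmul_eq_mul, ← hS]
  have hsum : ∑ i : Fin (n + m), g (Fin.append w c i)
      = S + ((n - K : ℕ) : ℝ≥0∞) * D + C := by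
    rw [Fin.sum_univ_add]
    simp only [Fin.append_left, Fin.append_right]
    rw [hsumw, ← hC]
  have hkey : min (g 0) (∑ i : Fin (n + m), g (Fin.append w c i)) = g that := by
    rw [hsum, hmul, tsub_tsub]
    by_cases hle : S + C ≤ g that
    · have : S + (g that - (S + C)) + C = g that := by
        rw [add_right_comm, add_tsub_cancel_of_le hle]
      rw [this, min_eq_right hgthat0]
    · push_neg at hle
      have hx0 : g that - (S + C) = 0 := tsub_eq_zero_of_le hle.le
      have hlam1 : lamK = 1 := by
        rw [hlam, hD, tsub_tsub, hx0, ENNReal.zero_div, ← hg1, hginv_g 1 h11]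
      have hS0 : S = 0 := by
        refine Finset.sum_eq_zero fun i hi => ?_
        have h1 : t i = 1 := le_antisymm (ht i).2 (hlam1 ▸ hkeep i hi)
        rw [h1, hg1]
      have hgTc : g (Tgen g ginv c) = min (g 0) C :=
        (hg_ginv (min (g 0) C) (min_le_left _ _)).1
      have hmin : min (g 0) C ≤ g that := by
        rw [← hgTc]; exact hganti.antitoneOn hthat01 hTc hhigh
      have hCg : g that < C := by rwa [hS0, zero_add] at hle
      have hgt0 : g that = g 0 := by
        rcases min_cases (g 0) C with ⟨h1, h2⟩ | ⟨h1, h2⟩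
        · exact le_antisymm hgthat0 (h1 ▸ hmin)
        · exact absurd (h1 ▸ hmin) (not_le.2 hCg)
      rw [hx0, hS0, add_zero, zero_add, min_eq_left, hgt0]
      rw [← hgt0]; exact hCg.le
  show ginv (min (g 0) (∑ i : Fin (n + m), g (Fin.append w c i))) = that
  rw [hkey, hginv_g that hthat01]
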